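/- arXiv:2303.04152 — 2 statements merged into one kernel-verified Lean document; each statement's English description precedes it below -/
import Mathlib

section
/- Let m, n be integers with m ≥ 1 and n ≥ 2m + 1. Alice has no winning strategy in the achievement game (S_{m,n}, K_{2n, 2m+1}, +), played on the complete bipartite graph with parts of sizes 2n and 2m+1. -/
namespace AchievementGame

/-- A strategy for the achievement game: given the history of all moves played so far
(earliest first), produce the next move (an edge, i.e. an element of `Sym2`). -/
def Strategy (α : Type*) : Type _ := List (Sym2 α) → Sym2 α

/-- A strategy is valid for the host graph `G` if, whenever some edge of `G` is still
uncolored, it chooses an uncolored edge of `G`. -/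
def Strategy.Valid {α : Type*} (G : SimpleGraph α) (s : Strategy α) : Prop :=
  ∀ l : List (Sym2 α), (∃ e ∈ G.edgeSet, e ∉ l) → s l ∈ G.edgeSet ∧ s l ∉ l

/-- The history of the first `n` moves when Alice plays strategy `σ` and Bob plays
strategy `τ`; Alice moves first and the players alternate. -/
def hist {α : Type*} (σ τ : Strategy α) : ℕ → List (Sym2 α)
  | 0 => []
  | n + 1 => hist σ τ n ++ [(if n % 2 = 0 then σ else τ) (hist σ τ n)]

/-- The `n`-th move (0-indexed): even indices are Alice's (blue) moves,
odd indices are Bob's (red) moves. -/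
def move {α : Type*} (σ τ : Strategy α) (n : ℕ) : Sym2 α :=
  (if n % 2 = 0 then σ else τ) (hist σ τ n)

/-- The set `s` of edges contains a copy of the graph `F`. -/
def HasCopy {α β : Type*} (F : SimpleGraph β) (s : Set (Sym2 α)) : Prop :=
  ∃ f : β ↪ α, ∀ a b, F.Adj a b → s(f a, f b) ∈ s

/-- Alice has a winning strategy in the achievement game `(F, G, +)`: Alice has a valid
strategy such that against every valid strategy of Bob, at some legal move of Alice
(her `(k+1)`-st move, which exists since `2k+1 ≤ |E(G)|`) the blue edges contain a copy
of `F`, while the red edges played strictly before do not. -/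
def AliceWins {α β : Type*} (F : SimpleGraph β) (G : SimpleGraph α) : Prop :=
  ∃ σ : Strategy α, Strategy.Valid G σ ∧ ∀ τ : Strategy α, Strategy.Valid G τ →
    ∃ k : ℕ, 2 * k + 1 ≤ G.edgeSet.ncard ∧
      HasCopy F {e | ∃ i ≤ k, e = move σ τ (2 * i)} ∧
      ¬ HasCopy F {e | ∃ i < k, e = move σ τ (2 * i + 1)}

/-- The matching `mK₂` consisting of `m` pairwise disjoint edges. -/
def matching (m : ℕ) : SimpleGraph (Fin m ⊕ Fin m) :=
  SimpleGraph.fromRel (fun a b => ∃ i, a = Sum.inl i ∧ b = Sum.inr i)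

/-- The star `K_{1,m}`: the center `0` joined to `m` leaves. -/
def star (m : ℕ) : SimpleGraph (Fin (m + 1)) :=
  SimpleGraph.fromRel (fun a _ => a = 0)

/-- The double star `S_{m,n}`: disjoint stars `K_{1,m}` and `K_{1,n}` with an edge
joining their centers `Sum.inl 0` and `Sum.inr 0`. -/
def doubleStar (m n : ℕ) : SimpleGraph (Fin (m + 1) ⊕ Fin (n + 1)) :=
  SimpleGraph.fromRel (fun a b =>
    (a = Sum.inl 0 ∧ ∃ i, b = Sum.inl i) ∨
    (a = Sum.inr 0 ∧ ∃ j, b = Sum.inr j) ∨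
    (a = Sum.inl 0 ∧ b = Sum.inr 0))

/-- The disjoint union `K_{1,m} ∪ nK₂` of a star and a matching. -/
def starMatching (m n : ℕ) : SimpleGraph (Fin (m + 1) ⊕ (Fin n ⊕ Fin n)) :=
  SimpleGraph.fromRel (fun a b =>
    (a = Sum.inl 0 ∧ ∃ i, b = Sum.inl i) ∨
    (∃ i, a = Sum.inr (Sum.inl i) ∧ b = Sum.inr (Sum.inr i)))

end AchievementGame

open AchievementGame

section Aux

open SimpleGraph

variable {α : Type*}

/-! ### Generic facts about `hist` and `move` -/

lemma hist_succ (σ τ : Strategy α) (t : ℕ) :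
    hist σ τ (t + 1) = hist σ τ t ++ [move σ τ t] := rfl

lemma hist_length (σ τ : Strategy α) (t : ℕ) : (hist σ τ t).length = t := by
  induction t with
  | zero => rfl
  | succ t ih => simp [hist_succ, ih]

lemma mem_hist_mono (σ τ : Strategy α) {t t' : ℕ} (h : t ≤ t') {a : Sym2 α}
    (ha : a ∈ hist σ τ t) : a ∈ hist σ τ t' := by
  induction t', h using Nat.le_induction with
  | base => exact ha
  | succ t' h ih => rw [hist_succ]; exact List.mem_append_left _ ih

lemma move_mem_hist (σ τ : Strategy α) {t t' : ℕ} (h : t < t') :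
    move σ τ t ∈ hist σ τ t' := by
  apply mem_hist_mono σ τ h
  rw [hist_succ]
  simp

/-- If fewer moves have been played than there are edges, some edge is unplayed. -/
lemma exists_unplayed [Fintype α] (G : SimpleGraph α) (σ τ : Strategy α) {t : ℕ}
    (h : t < G.edgeSet.ncard) : ∃ e ∈ G.edgeSet, e ∉ hist σ τ t := by
  classical
  by_contra hcon
  push_neg at hcon
  have hsub : G.edgeSet ⊆ ↑(hist σ τ t).toFinset := by
    intro e he
    simpa using hcon e he
  have h1 : G.edgeSet.ncard ≤ ((hist σ τ t).toFinset : Set (Sym2 α)).ncard :=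
    Set.ncard_le_ncard hsub (Set.toFinite _)
  rw [Set.ncard_coe_finset] at h1
  have h2 := (hist σ τ t).toFinset_card_le
  rw [hist_length] at h2
  omega

lemma move_legal [Fintype α] (G : SimpleGraph α) (σ τ : Strategy α)
    (hσ : Strategy.Valid G σ) (hτ : Strategy.Valid G τ) {t : ℕ}
    (h : t < G.edgeSet.ncard) :
    move σ τ t ∈ G.edgeSet ∧ move σ τ t ∉ hist σ τ t := by
  have hex := exists_unplayed G σ τ h
  unfold move
  by_cases ht : t % 2 = 0
  · simp only [ht, if_pos]
    exact hσ _ hex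
  · simp only [ht, if_neg]
    exact hτ _ hex

/-! ### The pairing on the bipartite host graph -/

/-- The fixed-point-free involution `i ↦ i + n` on `Fin (2*n)`. -/
def flipF (n : ℕ) : Fin (2 * n) → Fin (2 * n) := fun i =>
  ⟨(i.val + n) % (2 * n), Nat.mod_lt _ i.pos⟩

lemma flipF_flipF (n : ℕ) (i : Fin (2 * n)) : flipF n (flipF n i) = i := by
  apply Fin.ext
  show ((i.val + n) % (2 * n) + n) % (2 * n) = i.val
  rw [Nat.mod_add_mod]
  have h : i.val + n + n = i.val + 2 * n := by ring
  rw [h, Nat.add_mod_right, Nat.mod_eq_of_lt i.isLt]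

lemma flipF_injective (n : ℕ) : Function.Injective (flipF n) := by
  intro a b hab
  have := congrArg (flipF n) hab
  rwa [flipF_flipF, flipF_flipF] at this

lemma flipF_ne (n : ℕ) (hn : 1 ≤ n) (i : Fin (2 * n)) : flipF n i ≠ i := by
  intro hcon
  have h : (i.val + n) % (2 * n) = i.val := congrArg Fin.val hcon
  have hi : i.val < 2 * n := i.isLt
  rcases Nat.lt_or_ge (i.val + n) (2 * n) with hlt | hge
  · rw [Nat.mod_eq_of_lt hlt] at h; omega
  · rw [Nat.mod_eq_sub_mod hge, Nat.mod_eq_of_lt (by omega)] at h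
    omega

/-- The pairing map on vertices of `K_{2n,2m+1}`. -/
def vFlip (m n : ℕ) : Fin (2 * n) ⊕ Fin (2 * m + 1) → Fin (2 * n) ⊕ Fin (2 * m + 1) :=
  Sum.map (flipF n) id

lemma vFlip_vFlip (m n : ℕ) (v : Fin (2 * n) ⊕ Fin (2 * m + 1)) :
    vFlip m n (vFlip m n v) = v := by
  cases v with
  | inl i => simp [vFlip, flipF_flipF]
  | inr j => simp [vFlip]

/-- The pairing map on edges of `K_{2n,2m+1}`. -/
def eFlip (m n : ℕ) : Sym2 (Fin (2 * n) ⊕ Fin (2 * m + 1)) →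
    Sym2 (Fin (2 * n) ⊕ Fin (2 * m + 1)) :=
  Sym2.map (vFlip m n)

lemma eFlip_eFlip (m n : ℕ) (e : Sym2 (Fin (2 * n) ⊕ Fin (2 * m + 1))) :
    eFlip m n (eFlip m n e) = e := by
  induction e with
  | _ a b => simp [eFlip, vFlip_vFlip]

lemma eFlip_mem_edgeSet (m n : ℕ) {e : Sym2 (Fin (2 * n) ⊕ Fin (2 * m + 1))}
    (he : e ∈ (completeBipartiteGraph (Fin (2 * n)) (Fin (2 * m + 1))).edgeSet) :
    eFlip m n e ∈ (completeBipartiteGraph (Fin (2 * n)) (Fin (2 * m + 1))).edgeSet := by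
  induction e with
  | _ a b =>
    rw [SimpleGraph.mem_edgeSet] at he
    cases a <;> cases b <;> simp_all [eFlip, vFlip]

lemma eFlip_ne (m n : ℕ) (hn : 1 ≤ n) {e : Sym2 (Fin (2 * n) ⊕ Fin (2 * m + 1))}
    (he : e ∈ (completeBipartiteGraph (Fin (2 * n)) (Fin (2 * m + 1))).edgeSet) :
    eFlip m n e ≠ e := by
  induction e with
  | _ a b =>
    rw [SimpleGraph.mem_edgeSet] at he
    intro hcon
    cases a with
    | inl i =>
      cases b with
      | inl i' => simp at he
      | inr j =>
        simp only [eFlip, vFlip, Sym2.map_pair_eq, Sum.map_inl, Sum.map_inr, id,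
          Sym2.eq_iff] at hcon
        rcases hcon with ⟨h1, _⟩ | ⟨h1, h2⟩
        · exact flipF_ne n hn i (Sum.inl.inj h1)
        · exact Sum.inl_ne_inr h1
    | inr j =>
      cases b with
      | inl i =>
        simp only [eFlip, vFlip, Sym2.map_pair_eq, Sum.map_inl, Sum.map_inr, id,
          Sym2.eq_iff] at hcon
        rcases hcon with ⟨_, h2⟩ | ⟨h1, h2⟩
        · exact flipF_ne n hn i (Sum.inl.inj h2)
        · exact Sum.inr_ne_inl h1
      | inr j' => simp at he

/-! ### No copy of the double star in a pairing-respecting edge set -/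

lemma no_copy_of_pairing (m n : ℕ) (hm : 1 ≤ m) (hn : 2 * m + 1 ≤ n)
    (B : Set (Sym2 (Fin (2 * n) ⊕ Fin (2 * m + 1))))
    (hBE : B ⊆ (completeBipartiteGraph (Fin (2 * n)) (Fin (2 * m + 1))).edgeSet)
    (hBp : ∀ e ∈ B, eFlip m n e ∉ B) :
    ¬ HasCopy (doubleStar m n) B := by
  rintro ⟨f, hf⟩
  set c := f (Sum.inr 0) with hc
  -- the `n+1` neighbours of the big center in the copy
  set g : Fin (n + 1) → Fin (2 * n) ⊕ Fin (2 * m + 1) :=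
    fun j => if j = 0 then f (Sum.inl 0) else f (Sum.inr j) with hg
  have hg_inj : Function.Injective g := by
    intro a b hab
    simp only [hg] at hab
    by_cases ha : a = 0 <;> by_cases hb : b = 0
    · rw [ha, hb]
    · rw [if_pos ha, if_neg hb] at hab
      exact absurd (f.injective hab) (by simp)
    · rw [if_neg ha, if_pos hb] at hab
      exact absurd (f.injective hab) (by simp)
    · rw [if_neg ha, if_neg hb] at hab
      exact Sum.inr.inj (f.injective hab)
  have hg_mem : ∀ j, s(c, g j) ∈ B := by
    intro j
    by_cases hj : j = 0
    · have hadj : (doubleStar m n).Adj (Sum.inl 0) (Sum.inr 0) := by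
        rw [doubleStar, SimpleGraph.fromRel_adj]
        exact ⟨Sum.inl_ne_inr, Or.inl (Or.inr (Or.inr ⟨rfl, rfl⟩))⟩
      have hb := hf _ _ hadj
      simp only [hg, hj, if_pos rfl, hc]
      rwa [Sym2.eq_swap]
    · have hadj : (doubleStar m n).Adj (Sum.inr 0) (Sum.inr j) := by
        rw [doubleStar, SimpleGraph.fromRel_adj]
        refine ⟨fun h => hj (Sum.inr.inj h).symm, Or.inl ?_⟩
        exact Or.inr (Or.inl ⟨rfl, j, rfl⟩)
      have hb := hf _ _ hadj
      simpa only [hg, if_neg hj, hc] using hb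
  -- case on the side of the big center
  rcases hcc : c with i | j0
  · -- center on the left: n+1 distinct right vertices, impossible
    have hright : ∀ j, ∃ y, g j = Sum.inr y := by
      intro j
      have hmem := hBE (hg_mem j)
      rw [hcc, SimpleGraph.mem_edgeSet] at hmem
      cases hgj : g j with
      | inl i' => rw [hgj] at hmem; simp at hmem
      | inr y => exact ⟨y, rfl⟩
    choose h hh using hright
    have hinj : Function.Injective h := by
      intro a b hab
      apply hg_inj
      rw [hh a, hh b, hab]
    have hcard := Fintype.card_le_of_injective h hinj
    simp only [Fintype.card_fin] at hcard
    omega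
  · -- center on the right: n+1 distinct left vertices avoiding their flips, impossible
    have hleft : ∀ j, ∃ y, g j = Sum.inl y := by
      intro j
      have hmem := hBE (hg_mem j)
      rw [hcc, SimpleGraph.mem_edgeSet] at hmem
      cases hgj : g j with
      | inl y => exact ⟨y, rfl⟩
      | inr y => rw [hgj] at hmem; simp at hmem
    choose h hh using hleft
    have hinj : Function.Injective h := by
      intro a b hab
      apply hg_inj
      rw [hh a, hh b, hab]
    have hflipmem : ∀ j, eFlip m n s(c, g j) = s(c, Sum.inl (flipF n (h j))) := by
      intro j
      rw [hcc, hh j]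
      simp [eFlip, vFlip]
    set H : Fin (n + 1) ⊕ Fin (n + 1) → Fin (2 * n) :=
      Sum.elim h (fun j => flipF n (h j)) with hH
    have hHinj : Function.Injective H := by
      have key : ∀ a b, h a ≠ flipF n (h b) := by
        intro a b hcon
        apply hBp _ (hg_mem b)
        rw [hflipmem b, ← hcon, ← hh a]
        exact hg_mem a
      intro a b hab
      cases a with
      | inl a =>
        cases b with
        | inl b => simp only [hH, Sum.elim_inl] at hab; rw [hinj hab]
        | inr b => exact absurd hab (key a b)
      | inr a =>
        cases b with
        | inl b => exact absurd hab.symm (key b a)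
        | inr b =>
          simp only [hH, Sum.elim_inr] at hab
          rw [hinj (flipF_injective n hab)]
    have hcard := Fintype.card_le_of_injective H hHinj
    simp only [Fintype.card_sum, Fintype.card_fin] at hcard
    omega

/-! ### Bob's pairing strategy -/

open Classical in
/-- Bob's pairing strategy: answer Alice's last move `e` with its partner `eFlip e`
when possible, otherwise play any unplayed edge. -/
noncomputable def bob (m n : ℕ) : Strategy (Fin (2 * n) ⊕ Fin (2 * m + 1)) := fun l =>
  if (eFlip m n ((l.getLast?).getD s(Sum.inr 0, Sum.inr 0)) ∈
        (completeBipartiteGraph (Fin (2 * n)) (Fin (2 * m + 1))).edgeSet ∧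
      eFlip m n ((l.getLast?).getD s(Sum.inr 0, Sum.inr 0)) ∉ l) then
    eFlip m n ((l.getLast?).getD s(Sum.inr 0, Sum.inr 0))
  else if h : ∃ e ∈ (completeBipartiteGraph (Fin (2 * n)) (Fin (2 * m + 1))).edgeSet,
      e ∉ l then h.choose
  else s(Sum.inr 0, Sum.inr 0)

lemma bob_valid (m n : ℕ) :
    Strategy.Valid (completeBipartiteGraph (Fin (2 * n)) (Fin (2 * m + 1))) (bob m n) := by
  classical
  intro l hl
  unfold bob
  split
  · next hcond => exact hcond
  · exact ⟨hl.choose_spec.1, hl.choose_spec.2⟩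

lemma bob_concat (m n : ℕ) (l : List (Sym2 (Fin (2 * n) ⊕ Fin (2 * m + 1))))
    (e : Sym2 (Fin (2 * n) ⊕ Fin (2 * m + 1)))
    (h1 : eFlip m n e ∈ (completeBipartiteGraph (Fin (2 * n)) (Fin (2 * m + 1))).edgeSet)
    (h2 : eFlip m n e ∉ l ++ [e]) :
    bob m n (l ++ [e]) = eFlip m n e := by
  unfold bob
  rw [List.getLast?_concat]
  simp only [Option.getD_some]
  rw [if_pos ⟨h1, h2⟩]

/-- Against Bob's pairing strategy, the partner of each earlier blue edge is already
on the board. -/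
lemma partner_played (m n : ℕ) (σ : Strategy (Fin (2 * n) ⊕ Fin (2 * m + 1)))
    (hσ : Strategy.Valid (completeBipartiteGraph (Fin (2 * n)) (Fin (2 * m + 1))) σ)
    {i t : ℕ} (hlegal : 2 * i + 1 <
      (completeBipartiteGraph (Fin (2 * n)) (Fin (2 * m + 1))).edgeSet.ncard)
    (ht : 2 * i + 2 ≤ t) :
    eFlip m n (move σ (bob m n) (2 * i)) ∈ hist σ (bob m n) t := by
  classical
  have heE : move σ (bob m n) (2 * i) ∈
      (completeBipartiteGraph (Fin (2 * n)) (Fin (2 * m + 1))).edgeSet :=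
    (move_legal _ σ (bob m n) hσ (bob_valid m n) (by omega)).1
  have hpE := eFlip_mem_edgeSet m n heE
  by_cases hmem : eFlip m n (move σ (bob m n) (2 * i)) ∈ hist σ (bob m n) (2 * i + 1)
  · exact mem_hist_mono _ _ (by omega) hmem
  · -- Bob plays the partner as move `2*i+1`
    have h3 : hist σ (bob m n) (2 * i + 1)
        = hist σ (bob m n) (2 * i) ++ [move σ (bob m n) (2 * i)] :=
      hist_succ σ (bob m n) (2 * i)
    have hbmove : move σ (bob m n) (2 * i + 1)
        = eFlip m n (move σ (bob m n) (2 * i)) := by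
      have h4 : move σ (bob m n) (2 * i + 1)
          = bob m n (hist σ (bob m n) (2 * i + 1)) := by
        unfold move
        rw [if_neg (by omega)]
      rw [h4, h3]
      exact bob_concat m n _ _ hpE (h3 ▸ hmem)
    rw [← hbmove]
    exact move_mem_hist _ _ (by omega)

end Aux

/-- Let `m, n` be integers with `m ≥ 1` and `n ≥ 2m + 1`. Alice has no winning strategy
in the achievement game `(S_{m,n}, K_{2n,2m+1}, +)`. -/
theorem stmt10 (m n : ℕ) (hm : 1 ≤ m) (hn : 2 * m + 1 ≤ n) :
    ¬ AliceWins (doubleStar m n)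
      (completeBipartiteGraph (Fin (2 * n)) (Fin (2 * m + 1))) := by
  rintro ⟨σ, hσ, hwin⟩
  obtain ⟨k, hk, hblue, hred⟩ := hwin (bob m n) (bob_valid m n)
  refine no_copy_of_pairing m n hm hn _ ?_ ?_ hblue
  · rintro e ⟨i, hi, rfl⟩
    exact (move_legal _ σ (bob m n) hσ (bob_valid m n) (by omega)).1
  · rintro e ⟨i, hi, rfl⟩ ⟨j, hj, hpe⟩
    have hnn : 1 ≤ n := by omega
    have hiE : move σ (bob m n) (2 * i) ∈
        (completeBipartiteGraph (Fin (2 * n)) (Fin (2 * m + 1))).edgeSet :=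
      (move_legal _ σ (bob m n) hσ (bob_valid m n) (by omega)).1
    rcases lt_trichotomy i j with hij | rfl | hij
    · have hp := partner_played m n σ hσ (i := i) (t := 2 * j) (by omega) (by omega)
      rw [hpe] at hp
      exact (move_legal _ σ (bob m n) hσ (bob_valid m n)
        (by omega : 2 * j <
          (completeBipartiteGraph (Fin (2 * n)) (Fin (2 * m + 1))).edgeSet.ncard)).2 hp
    · exact eFlip_ne m n hnn hiE hpe
    · have hp := partner_played m n σ hσ (i := j) (t := 2 * i) (by omega) (by omega)
      have h2 : eFlip m n (move σ (bob m n) (2 * j)) = move σ (bob m n) (2 * i) := by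
        rw [← hpe, eFlip_eFlip]
      rw [h2] at hp
      exact (move_legal _ σ (bob m n) hσ (bob_valid m n)
        (by omega : 2 * i <
          (completeBipartiteGraph (Fin (2 * n)) (Fin (2 * m + 1))).edgeSet.ncard)).2 hp
end

section
/- Let m ≥ 2 and let n_1, n_2 be integers with n_1 ≥ n_2 and 1 ≤ n_2 ≤ m − 1. Alice has a winning strategy in the achievement game (K_{1,m}, K_{n_1,n_2}, +) if and only if n_1 ≥ 2m − 1. -/
namespace AchievementGame

variable {α : Type*}

lemma hist_succ (σ τ : Strategy α) (n : ℕ) :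
    hist σ τ (n + 1) = hist σ τ n ++ [move σ τ n] := rfl

lemma hist_eq (σ τ : Strategy α) (n : ℕ) :
    hist σ τ n = (List.range n).map (move σ τ) := by
  induction n with
  | zero => rfl
  | succ n ih => rw [hist_succ, ih, List.range_succ, List.map_append]; rfl

lemma mem_hist_iff {σ τ : Strategy α} {n : ℕ} {e : Sym2 α} :
    e ∈ hist σ τ n ↔ ∃ i < n, e = move σ τ i := by
  simp [hist_eq, eq_comm]

lemma length_hist (σ τ : Strategy α) (n : ℕ) : (hist σ τ n).length = n := by
  simp [hist_eq]

lemma exists_fresh {G : SimpleGraph α} (σ τ : Strategy α) {n : ℕ}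
    (hn : n < G.edgeSet.ncard) : ∃ e ∈ G.edgeSet, e ∉ hist σ τ n := by
  classical
  by_contra hcon
  push_neg at hcon
  have hsub : G.edgeSet ⊆ ↑(hist σ τ n).toFinset := by
    intro e he; simpa using hcon e he
  have := Set.ncard_le_ncard hsub (Finset.finite_toSet _)
  rw [Set.ncard_coe_finset] at this
  have := this.trans ((hist σ τ n).toFinset_card_le)
  rw [length_hist] at this
  omega

lemma move_legal {G : SimpleGraph α} {σ τ : Strategy α} (hσ : σ.Valid G) (hτ : τ.Valid G)
    {n : ℕ} (hn : n < G.edgeSet.ncard) :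
    move σ τ n ∈ G.edgeSet ∧ move σ τ n ∉ hist σ τ n := by
  have h := exists_fresh σ τ (G := G) hn
  unfold move
  split
  · exact hσ _ h
  · exact hτ _ h

lemma move_ne {G : SimpleGraph α} {σ τ : Strategy α} (hσ : σ.Valid G) (hτ : τ.Valid G)
    {i j : ℕ} (hij : i < j) (hj : j < G.edgeSet.ncard) :
    move σ τ i ≠ move σ τ j := by
  intro hcon
  have h2 := (move_legal hσ hτ hj).2
  exact h2 (mem_hist_iff.mpr ⟨i, hij, hcon.symm⟩)

open Classical in
noncomputable def stratOf [Nonempty α] (G : SimpleGraph α)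
    (f : List (Sym2 α) → Option (Sym2 α)) : Strategy α := fun l =>
  if h : ∃ e ∈ G.edgeSet, e ∉ l then
    match f l with
    | some e => if e ∈ G.edgeSet ∧ e ∉ l then e else h.choose
    | none => h.choose
  else s(Classical.arbitrary α, Classical.arbitrary α)

lemma stratOf_valid [Nonempty α] (G : SimpleGraph α)
    (f : List (Sym2 α) → Option (Sym2 α)) : (stratOf G f).Valid G := by
  intro l h
  have hc := h.choose_spec
  classical
  unfold stratOf
  rw [dif_pos h]
  cases hfl : f l with
  | none => exact ⟨hc.1, hc.2⟩
  | some e =>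
    by_cases he : e ∈ G.edgeSet ∧ e ∉ l
    · simp only [if_pos he]; exact he
    · simp only [if_neg he]; exact ⟨hc.1, hc.2⟩

lemma stratOf_eq [Nonempty α] {G : SimpleGraph α} {f : List (Sym2 α) → Option (Sym2 α)}
    {l : List (Sym2 α)} {e : Sym2 α} (hf : f l = some e)
    (he : e ∈ G.edgeSet ∧ e ∉ l) : stratOf G f l = e := by
  have h : ∃ e ∈ G.edgeSet, e ∉ l := ⟨e, he.1, he.2⟩
  classical
  unfold stratOf
  rw [dif_pos h, hf]
  show (if e ∈ G.edgeSet ∧ e ∉ l then e else h.choose) = e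
  exact if_pos he

lemma ncard_ge (n₁ n₂ : ℕ) (h₁ : 1 ≤ n₂) :
    n₁ ≤ (completeBipartiteGraph (Fin n₁) (Fin n₂)).edgeSet.ncard := by
  classical
  set u₀ : Fin n₂ := ⟨0, h₁⟩
  have hinj : Function.Injective
      (fun x : Fin n₁ => s(Sum.inl x, (Sum.inr u₀ : Fin n₁ ⊕ Fin n₂))) := by
    intro a b hab; simpa using hab
  have hsub : Set.range (fun x : Fin n₁ => s(Sum.inl x, (Sum.inr u₀ : Fin n₁ ⊕ Fin n₂)))
      ⊆ (completeBipartiteGraph (Fin n₁) (Fin n₂)).edgeSet := by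
    rintro e ⟨x, rfl⟩; simp
  have hle := Set.ncard_le_ncard hsub (Set.toFinite _)
  rwa [← Set.image_univ, Set.ncard_image_of_injective _ hinj, Set.ncard_univ,
    Nat.card_eq_fintype_card, Fintype.card_fin] at hle

lemma alice_wins (m n₁ n₂ : ℕ) (hm : 2 ≤ m) (h₁ : 1 ≤ n₂) (hbig : 2 * m - 1 ≤ n₁) :
    AliceWins (star m) (completeBipartiteGraph (Fin n₁) (Fin n₂)) := by
  classical
  have hne : Nonempty (Fin n₁ ⊕ Fin n₂) := ⟨Sum.inr ⟨0, h₁⟩⟩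
  set G := completeBipartiteGraph (Fin n₁) (Fin n₂) with hGdef
  set u₀ : Fin n₂ := ⟨0, h₁⟩ with hu₀
  set E : Fin n₁ → Sym2 (Fin n₁ ⊕ Fin n₂) := fun x => s(Sum.inl x, Sum.inr u₀) with hE
  have hEmem : ∀ x, E x ∈ G.edgeSet := by intro x; simp [hE, hGdef]
  have hEinj : Function.Injective E := by intro a b hab; simpa [hE] using hab
  set fA : List (Sym2 (Fin n₁ ⊕ Fin n₂)) → Option (Sym2 (Fin n₁ ⊕ Fin n₂)) :=
    fun l => if h : ∃ x, E x ∉ l then some (E h.choose) else none with hfA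
  refine ⟨stratOf G fA, stratOf_valid _ _, ?_⟩
  intro τ hτ
  set σ := stratOf G fA with hσdef
  have hσ : σ.Valid G := stratOf_valid _ _
  have hcard : n₁ ≤ G.edgeSet.ncard := ncard_ge n₁ n₂ h₁
  refine ⟨m - 1, by omega, ?_, ?_⟩
  · -- blue contains the star
    have key : ∀ i : Fin m, ∃ x : Fin n₁, move σ τ (2 * (i : ℕ)) = E x := by
      intro i
      have hil : 2 * (i : ℕ) < n₁ := by have := i.isLt; omega
      have hex : ∃ x, E x ∉ hist σ τ (2 * (i : ℕ)) := by
        by_contra hcon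
        push_neg at hcon
        have hc : (Finset.univ.image E).card ≤ (hist σ τ (2 * (i : ℕ))).toFinset.card := by
          apply Finset.card_le_card
          intro e he
          simp only [Finset.mem_image, Finset.mem_univ, true_and] at he
          obtain ⟨x, rfl⟩ := he
          simpa using hcon x
        rw [Finset.card_image_of_injective _ hEinj, Finset.card_univ, Fintype.card_fin] at hc
        have := hc.trans ((hist σ τ (2 * (i : ℕ))).toFinset_card_le)
        rw [length_hist] at this
        omega
      refine ⟨hex.choose, ?_⟩
      have hmove : move σ τ (2 * (i : ℕ)) = σ (hist σ τ (2 * (i : ℕ))) := by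
        simp [move, Nat.mul_mod_right]
      rw [hmove]
      exact stratOf_eq (by rw [hfA]; exact dif_pos hex) ⟨hEmem _, hex.choose_spec⟩
    choose xs hxs using key
    have hxsinj : Function.Injective xs := by
      have hlt : ∀ i j : Fin m, (i : ℕ) < (j : ℕ) → xs i ≠ xs j := by
        intro i j hij hc
        have hmne := move_ne hσ hτ (i := 2 * (i : ℕ)) (j := 2 * (j : ℕ)) (by omega)
          (by have := j.isLt; omega)
        rw [hxs i, hxs j, hc] at hmne
        exact hmne rfl
      intro i j hij
      by_contra hne'
      have hvne : (i : ℕ) ≠ (j : ℕ) := fun hc => hne' (Fin.ext hc)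
      rcases Nat.lt_or_ge (i : ℕ) (j : ℕ) with h' | h'
      · exact hlt i j h' hij
      · exact hlt j i (by omega) hij.symm
    refine ⟨⟨Fin.cases (Sum.inr u₀) (fun i => Sum.inl (xs i)), ?_⟩, ?_⟩
    · intro a b hab
      rcases Fin.eq_zero_or_eq_succ a with rfl | ⟨i, rfl⟩ <;>
        rcases Fin.eq_zero_or_eq_succ b with rfl | ⟨j, rfl⟩
      · rfl
      · simp only [Fin.cases_zero, Fin.cases_succ] at hab; exact absurd hab (by simp)
      · simp only [Fin.cases_succ, Fin.cases_zero] at hab; exact absurd hab (by simp)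
      · simp only [Fin.cases_succ, Sum.inl.injEq] at hab
        exact congrArg Fin.succ (hxsinj hab)
    · intro a b hab
      rw [star, SimpleGraph.fromRel_adj] at hab
      obtain ⟨hab1, hab2⟩ := hab
      show s((Fin.cases (Sum.inr u₀) (fun i => Sum.inl (xs i)) a : Fin n₁ ⊕ Fin n₂), (Fin.cases (Sum.inr u₀) (fun i => Sum.inl (xs i)) b : Fin n₁ ⊕ Fin n₂)) ∈ _
      rcases hab2 with rfl | rfl
      · obtain ⟨i, rfl⟩ := Fin.eq_succ_of_ne_zero (Ne.symm hab1)
        refine ⟨(i : ℕ), by have := i.isLt; omega, ?_⟩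
        simp only [Fin.cases_zero, Fin.cases_succ]
        rw [Sym2.eq_swap]
        exact (hxs i).symm
      · obtain ⟨i, rfl⟩ := Fin.eq_succ_of_ne_zero hab1
        refine ⟨(i : ℕ), by have := i.isLt; omega, ?_⟩
        simp only [Fin.cases_zero, Fin.cases_succ]
        exact (hxs i).symm
  · -- red has no star
    rintro ⟨f, hf⟩
    have hadj : ∀ b : Fin m, ∃ i < m - 1, s(f 0, f b.succ) = move σ τ (2 * i + 1) := by
      intro b
      apply hf
      rw [star, SimpleGraph.fromRel_adj]
      exact ⟨(Fin.succ_ne_zero b).symm, Or.inl rfl⟩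
    choose idx hidx1 hidx2 using hadj
    have hidxinj : Function.Injective idx := by
      intro b b' hbb
      have : s(f 0, f b.succ) = s(f 0, f b'.succ) := by rw [hidx2 b, hidx2 b', hbb]
      rw [Sym2.eq_iff] at this
      rcases this with ⟨_, h2⟩ | ⟨h1, h2⟩
      · exact Fin.succ_injective _ (f.injective h2)
      · exact (Fin.succ_ne_zero b' (f.injective h1).symm).elim
    have : Function.Injective (fun b : Fin m => (⟨idx b, hidx1 b⟩ : Fin (m - 1))) := by
      intro b b' hbb
      exact hidxinj (Fin.mk.inj_iff.mp hbb)
    have hcard' := Fintype.card_le_of_injective _ this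
    simp only [Fintype.card_fin] at hcard'
    omega

lemma bob_blocks (m n₁ n₂ : ℕ) (hm : 2 ≤ m) (h₁ : 1 ≤ n₂) (h₂ : n₂ ≤ m - 1)
    (hsmall : n₁ ≤ 2 * m - 2)
    (hw : AliceWins (star m) (completeBipartiteGraph (Fin n₁) (Fin n₂))) : False := by
  classical
  have hne : Nonempty (Fin n₁ ⊕ Fin n₂) := ⟨Sum.inr ⟨0, h₁⟩⟩
  set G := completeBipartiteGraph (Fin n₁) (Fin n₂) with hGdef
  set pr : ℕ → ℕ := fun a => if a % 2 = 0 then a + 1 else a - 1 with hpr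
  set prF : Fin n₁ → Fin n₁ := fun x => if h : pr x.val < n₁ then ⟨pr x.val, h⟩ else x with hprF
  have prF_val : ∀ x : Fin n₁, (prF x).val = if pr x.val < n₁ then pr x.val else x.val := by
    intro x
    rw [hprF]
    by_cases h : pr x.val < n₁
    · simp only [dif_pos h, if_pos h]
    · simp only [dif_neg h, if_neg h]
  have pair_lemma : ∀ x y : Fin n₁, x ≠ y → x.val / 2 = y.val / 2 → prF x = y ∧ prF y = x := by
    intro x y hxy hdiv
    have hx := x.isLt
    have hy := y.isLt
    have hvne : x.val ≠ y.val := fun hc => hxy (Fin.ext hc)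
    constructor
    · apply Fin.ext
      rw [prF_val, hpr]
      simp only
      split <;> split <;> omega
    · apply Fin.ext
      rw [prF_val, hpr]
      simp only
      split <;> split <;> omega
  set pOf : Sym2 (Fin n₁ ⊕ Fin n₂) → Option (Sym2 (Fin n₁ ⊕ Fin n₂)) := fun e =>
    if h : ∃ p : Fin n₁ × Fin n₂, e = s(Sum.inl p.1, Sum.inr p.2) then
      some s(Sum.inl (prF h.choose.1), Sum.inr h.choose.2) else none with hpOf
  have pOf_eq : ∀ (x : Fin n₁) (u : Fin n₂),
      pOf s(Sum.inl x, Sum.inr u) = some s(Sum.inl (prF x), Sum.inr u) := by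
    intro x u
    have hex : ∃ p : Fin n₁ × Fin n₂,
        s(Sum.inl x, Sum.inr u) = s(Sum.inl p.1, Sum.inr p.2) := ⟨(x, u), rfl⟩
    have hs := hex.choose_spec
    rw [Sym2.eq_iff] at hs
    have hp : hex.choose.1 = x ∧ hex.choose.2 = u := by
      rcases hs with ⟨hh1, hh2⟩ | ⟨hh1, hh2⟩
      · exact ⟨(Sum.inl.injEq _ _ ▸ hh1).symm, (Sum.inr.injEq _ _ ▸ hh2).symm⟩
      · exact absurd hh1 (by simp)
    rw [hpOf]
    simp only
    rw [dif_pos hex, hp.1, hp.2]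
  set fB : List (Sym2 (Fin n₁ ⊕ Fin n₂)) → Option (Sym2 (Fin n₁ ⊕ Fin n₂)) := fun l =>
    match l.getLast? with
    | some e => pOf e
    | none => none with hfB
  obtain ⟨σ, hσ, hwin⟩ := hw
  set τ := stratOf G fB with hτdef
  have hτ : τ.Valid G := stratOf_valid _ _
  obtain ⟨k, hk, hblue, _⟩ := hwin τ hτ
  obtain ⟨f, hf⟩ := hblue
  have hadj : ∀ b : Fin m, ∃ i ≤ k, s(f 0, f b.succ) = move σ τ (2 * i) := by
    intro b
    apply hf
    rw [star, SimpleGraph.fromRel_adj]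
    exact ⟨(Fin.succ_ne_zero b).symm, Or.inl rfl⟩
  choose idx hidx1 hidx2 using hadj
  have hedge : ∀ b : Fin m, G.Adj (f 0) (f b.succ) := by
    intro b
    rw [← SimpleGraph.mem_edgeSet, hidx2 b]
    exact (move_legal hσ hτ (by have := hidx1 b; omega)).1
  cases h0 : f 0 with
  | inl y =>
    have hz : ∀ b : Fin m, ∃ z : Fin n₂, f b.succ = Sum.inr z := by
      intro b
      have := hedge b
      rw [h0] at this
      rcases this with ⟨_, hr⟩ | ⟨hl, _⟩
      · exact Sum.isRight_iff.mp hr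
      · exact absurd hl (by simp)
    choose z hz using hz
    have hzinj : Function.Injective z := by
      intro b b' hbb
      have : f b.succ = f b'.succ := by rw [hz b, hz b', hbb]
      exact Fin.succ_injective _ (f.injective this)
    have := Fintype.card_le_of_injective z hzinj
    simp only [Fintype.card_fin] at this
    omega
  | inr u =>
    have hx : ∀ b : Fin m, ∃ x : Fin n₁, f b.succ = Sum.inl x := by
      intro b
      have := hedge b
      rw [h0] at this
      rcases this with ⟨hl, _⟩ | ⟨_, hr⟩
      · exact absurd hl (by simp)
      · exact Sum.isLeft_iff.mp hr
    choose x hxx using hx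
    have hxinj : Function.Injective x := by
      intro b b' hbb
      have : f b.succ = f b'.succ := by rw [hxx b, hxx b', hbb]
      exact Fin.succ_injective _ (f.injective this)
    have hmv : ∀ b : Fin m, move σ τ (2 * idx b) = s(Sum.inl (x b), Sum.inr u) := by
      intro b
      rw [← hidx2 b, h0, hxx b, Sym2.eq_swap]
    -- key pairing argument
    have hkey : ∀ b b' : Fin m, b ≠ b' → (x b).val / 2 ≠ (x b').val / 2 := by
      intro b b' hbb hdiv
      have hxne : x b ≠ x b' := fun hc => hbb (hxinj hc)
      obtain ⟨hp1, hp2⟩ := pair_lemma _ _ hxne hdiv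
      have hine : idx b ≠ idx b' := by
        intro hc
        apply hxne
        have := (hmv b).symm.trans (hc ▸ hmv b')
        simpa using this
      -- wlog: handle both orders with a single auxiliary claim
      have main : ∀ c c' : Fin m, idx c < idx c' → prF (x c) = x c' → False := by
        intro c c' hlt hprc
        have h2c : 2 * idx c' < G.edgeSet.ncard := by have := hidx1 c'; omega
        have hlast : (hist σ τ (2 * idx c + 1)).getLast? = some (move σ τ (2 * idx c)) := by
          rw [hist_succ]
          exact List.getLast?_concat
        have hfBval : fB (hist σ τ (2 * idx c + 1)) =
            some s(Sum.inl (x c'), Sum.inr u) := by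
          rw [hfB]
          simp only [hlast]
          rw [hmv c, pOf_eq, hprc]
        have hnotin : s(Sum.inl (x c'), Sum.inr u) ∉ hist σ τ (2 * idx c + 1) := by
          rw [← hmv c']
          intro hmem
          obtain ⟨t, ht, hte⟩ := mem_hist_iff.mp hmem
          exact move_ne hσ hτ (by omega) h2c hte.symm
        have hmem : s(Sum.inl (x c'), Sum.inr u) ∈ G.edgeSet := by simp [hGdef]
        have hmoveodd : move σ τ (2 * idx c + 1) = τ (hist σ τ (2 * idx c + 1)) := by
          have hmod : (2 * idx c + 1) % 2 = 1 := by omega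
          simp [move, hmod]
        have : move σ τ (2 * idx c + 1) = move σ τ (2 * idx c') := by
          rw [hmoveodd, hτdef, stratOf_eq hfBval ⟨hmem, hnotin⟩, hmv c']
        exact move_ne hσ hτ (by omega) h2c this
      rcases Nat.lt_or_ge (idx b) (idx b') with hlt | hge
      · exact main b b' hlt hp1
      · exact main b' b (by omega) hp2
    have hginj : Function.Injective
        (fun b : Fin m => (⟨(x b).val / 2, by have := (x b).isLt; omega⟩ :
          Fin ((n₁ - 1) / 2 + 1))) := by
      intro b b' hbb
      by_contra hne'
      exact hkey b b' hne' (Fin.mk.inj_iff.mp hbb)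
    have := Fintype.card_le_of_injective _ hginj
    simp only [Fintype.card_fin] at this
    have hn1pos : 0 < n₁ := (x ⟨0, by omega⟩).pos
    omega


end AchievementGame

open AchievementGame

/-- Let `m ≥ 2` and let `n₁, n₂` be integers with `n₁ ≥ n₂` and `1 ≤ n₂ ≤ m − 1`.
Alice has a winning strategy in the achievement game `(K_{1,m}, K_{n₁,n₂}, +)` if and
only if `n₁ ≥ 2m − 1`. -/
theorem stmt14 (m n₁ n₂ : ℕ) (hm : 2 ≤ m) (h : n₂ ≤ n₁) (h₁ : 1 ≤ n₂)
    (h₂ : n₂ ≤ m - 1) :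
    AliceWins (star m) (completeBipartiteGraph (Fin n₁) (Fin n₂)) ↔ 2 * m - 1 ≤ n₁ := by
  constructor
  · intro hw
    by_contra hlt
    exact bob_blocks m n₁ n₂ hm h₁ h₂ (by omega) hw
  · intro hbig
    exact alice_wins m n₁ n₂ hm h₁ hbig
end
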